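/- Fenchel conjugate of a supremum: Let E be a real topological vector space, x₀* ∈ E*, Λ a nonempty set, and {f_λ}_{λ∈Λ} a family of real-valued functions on E such that {f_λ − x₀*}_{λ∈Λ} is infsup-convex on E and λ ↦ f_λ(x) is bounded for every x ∈ E. Then (sup_{λ∈Λ} f_λ)*(x₀*) = min over L ∈ Δ_Λ of (L({f_λ(·)}_{λ∈Λ}))*(x₀*), the minimum being attained. -/

import Mathlib

open scoped ENNReal

/-- The constant-one function in `ℓ^∞(Λ)`. -/
noncomputable def lpinfOne (Λ : Type*) : lp (fun _ : Λ => ℝ) ∞ :=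
  ⟨fun _ => (1 : ℝ), memℓp_infty ⟨1, by rintro x ⟨l, rfl⟩; simp⟩⟩

/-- A family `{f_λ}` of real-valued functions on `X` is infsup-convex on `X`. -/
def InfSupConvex {Λ X : Type*} (f : Λ → X → ℝ) : Prop :=
  ∀ m : ℕ, 0 < m → ∀ t : Fin m → ℝ, (∀ j, 0 ≤ t j) → (∑ j, t j) = 1 →
    ∀ x : Fin m → X,
      ⨅ x' : X, ⨆ l, (f l x' : EReal) ≤ ⨆ l, ((∑ j, t j * f l (x j) : ℝ) : EReal)

/-- The Fenchel conjugate (with values in the extended reals) of a real-valued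
function `g` on `E`, evaluated at a continuous linear functional `p`. -/
noncomputable def fenchel {E : Type*} [AddCommGroup E] [Module ℝ E] [TopologicalSpace E]
    (g : E → ℝ) (p : E →L[ℝ] ℝ) : EReal :=
  ⨆ x : E, ((p x - g x : ℝ) : EReal)

private lemma bdd_shift {ι : Type*} {g : ι → ℝ} (hb : BddAbove (Set.range g)) (a : ℝ) :
    BddAbove (Set.range fun i => g i + a) := by
  obtain ⟨M, hM⟩ := hb
  refine ⟨M + a, ?_⟩
  rintro _ ⟨i, rfl⟩
  exact add_le_add (hM (Set.mem_range_self i)) (le_refl a)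

private lemma bdd_mul {ι : Type*} {g : ι → ℝ} (hb : BddAbove (Set.range g)) {r : ℝ}
    (hr : 0 ≤ r) : BddAbove (Set.range fun i => r * g i) := by
  obtain ⟨M, hM⟩ := hb
  refine ⟨r * M, ?_⟩
  rintro _ ⟨i, rfl⟩
  exact mul_le_mul_of_nonneg_left (hM (Set.mem_range_self i)) hr

private lemma ciSup_add_const {ι : Type*} [Nonempty ι] {g : ι → ℝ}
    (hb : BddAbove (Set.range g)) (a : ℝ) : (⨆ i, (g i + a)) = (⨆ i, g i) + a := by
  apply le_antisymm
  · exact ciSup_le fun i => add_le_add (le_ciSup hb i) (le_refl a)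
  · rw [← le_sub_iff_add_le]
    exact ciSup_le fun i => le_sub_iff_add_le.mpr (le_ciSup (bdd_shift hb a) i)

private lemma const_mul_ciSup {ι : Type*} [Nonempty ι] {g : ι → ℝ}
    (hb : BddAbove (Set.range g)) {r : ℝ} (hr : 0 ≤ r) :
    r * (⨆ i, g i) = ⨆ i, r * g i := by
  rcases eq_or_lt_of_le hr with h | h
  · simp [← h, ciSup_const]
  apply le_antisymm
  · have h2 : (⨆ i, g i) ≤ r⁻¹ * ⨆ i, r * g i :=
      ciSup_le fun i => by
        rw [le_inv_mul_iff₀ h]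
        exact le_ciSup (bdd_mul hb hr) i
    calc r * (⨆ i, g i) ≤ r * (r⁻¹ * ⨆ i, r * g i) := mul_le_mul_of_nonneg_left h2 hr
      _ = ⨆ i, r * g i := by field_simp
  · exact ciSup_le fun i => mul_le_mul_of_nonneg_left (le_ciSup hb i) hr

private lemma coe_ciSup {ι : Type*} [Nonempty ι] {g : ι → ℝ} (hb : BddAbove (Set.range g)) :
    (⨆ i, ((g i : ℝ) : EReal)) = ((⨆ i, g i : ℝ) : EReal) := by
  obtain ⟨i₀⟩ := ‹Nonempty ι›
  obtain ⟨b, hb'⟩ := hb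
  set M := ⨆ i, ((g i : ℝ) : EReal) with hM
  have h1 : ((g i₀ : ℝ) : EReal) ≤ M := le_iSup (fun i => ((g i : ℝ) : EReal)) i₀
  have h2 : M ≤ (b : EReal) := iSup_le fun i => EReal.coe_le_coe_iff.mpr (hb' (Set.mem_range_self i))
  have hbot : M ≠ ⊥ := fun h => by rw [h] at h1; exact (EReal.coe_ne_bot _) (le_bot_iff.mp h1)
  have htop : M ≠ ⊤ := fun h => by rw [h] at h2; exact (EReal.coe_lt_top b).not_ge h2
  have hco : M = (M.toReal : EReal) := (EReal.coe_toReal htop hbot).symm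
  have hub : ∀ i, g i ≤ M.toReal := fun i =>
    EReal.coe_le_coe_iff.mp (hco ▸ le_iSup (fun i => ((g i : ℝ) : EReal)) i)
  apply le_antisymm
  · exact iSup_le fun i => EReal.coe_le_coe_iff.mpr (le_ciSup ⟨b, fun y hy => by
      obtain ⟨j, rfl⟩ := hy; exact hb' (Set.mem_range_self j)⟩ i)
  · rw [hco]
    exact EReal.coe_le_coe_iff.mpr (ciSup_le hub)

private lemma lp_bddAbove {Λ : Type*} (Φ : lp (fun _ : Λ => ℝ) ∞) :
    BddAbove (Set.range fun l => Φ l) := by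
  obtain ⟨M, hM⟩ := memℓp_infty_iff.mp (lp.memℓp Φ)
  refine ⟨M, ?_⟩
  rintro _ ⟨l, rfl⟩
  exact (le_abs_self _).trans (by simpa [Real.norm_eq_abs] using hM (Set.mem_range_self l))

noncomputable def lpEval {Λ : Type*} (l : Λ) : lp (fun _ : Λ => ℝ) ∞ →ₗ[ℝ] ℝ where
  toFun Φ := Φ l
  map_add' Φ Ψ := by simp [lp.coeFn_add]
  map_smul' r Φ := by simp [lp.coeFn_smul]

set_option maxHeartbeats 1000000 in
/-- Conjugate-of-supremum formula: if `{f_λ - x₀*}` is infsup-convex on `E` and the family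
is pointwise bounded, then `(sup_λ f_λ)*(x₀*) = min_{L ∈ Δ_Λ} (L({f_λ(·)}))*(x₀*)`,
the minimum being attained. -/
theorem stmt14 (E Λ : Type*) [AddCommGroup E] [Module ℝ E] [TopologicalSpace E]
    [Nonempty Λ]
    (x₀ : E →L[ℝ] ℝ) (f : Λ → E → ℝ)
    (hconv : InfSupConvex (fun l x => f l x - x₀ x))
    (F : E → lp (fun _ : Λ => ℝ) ∞) (hF : ∀ x l, F x l = f l x) :
    ∃ L : lp (fun _ : Λ => ℝ) ∞ →ₗ[ℝ] ℝ,
      (∀ Φ : lp (fun _ : Λ => ℝ) ∞, (∀ l, 0 ≤ Φ l) → 0 ≤ L Φ) ∧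
      L (lpinfOne Λ) = 1 ∧
      fenchel (fun x => ⨆ l, f l x) x₀ = fenchel (fun x => L (F x)) x₀ ∧
      ∀ L' : lp (fun _ : Λ => ℝ) ∞ →ₗ[ℝ] ℝ,
        (∀ Φ : lp (fun _ : Λ => ℝ) ∞, (∀ l, 0 ≤ Φ l) → 0 ≤ L' Φ) →
        L' (lpinfOne Λ) = 1 →
        fenchel (fun x => ⨆ l, f l x) x₀ ≤ fenchel (fun x => L' (F x)) x₀ := by
  classical
  obtain ⟨l₀⟩ := ‹Nonempty Λ›
  -- boundedness of the families
  have hbddf : ∀ x : E, BddAbove (Set.range fun l => f l x) := by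
    intro x
    have h := lp_bddAbove (F x)
    simpa only [hF] using h
  -- L'(F x) ≤ sup_l f l x for any positive normalized L'
  have hsub : ∀ (L' : lp (fun _ : Λ => ℝ) ∞ →ₗ[ℝ] ℝ),
      (∀ Φ : lp (fun _ : Λ => ℝ) ∞, (∀ l, 0 ≤ Φ l) → 0 ≤ L' Φ) → L' (lpinfOne Λ) = 1 →
      ∀ x, L' (F x) ≤ ⨆ l, f l x := by
    intro L' hpos hone x
    have h0 : ∀ l, (0:ℝ) ≤ ((⨆ l', f l' x) • lpinfOne Λ - F x) l := by
      intro l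
      have he : ((⨆ l', f l' x) • lpinfOne Λ - F x) l = (⨆ l', f l' x) - f l x := by
        rw [lp.coeFn_sub, Pi.sub_apply, lp.coeFn_smul, Pi.smul_apply, hF, smul_eq_mul,
          show ((lpinfOne Λ) l : ℝ) = 1 from rfl, mul_one]
      rw [he]
      exact sub_nonneg.mpr (le_ciSup (hbddf x) l)
    have h1 := hpos _ h0
    rw [map_sub, map_smul, hone, smul_eq_mul, mul_one] at h1
    linarith
  have hmin : ∀ (L' : lp (fun _ : Λ => ℝ) ∞ →ₗ[ℝ] ℝ),
      (∀ Φ : lp (fun _ : Λ => ℝ) ∞, (∀ l, 0 ≤ Φ l) → 0 ≤ L' Φ) → L' (lpinfOne Λ) = 1 →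
      fenchel (fun x => ⨆ l, f l x) x₀ ≤ fenchel (fun x => L' (F x)) x₀ := by
    intro L' hpos hone
    refine iSup_mono fun x => EReal.coe_le_coe_iff.mpr ?_
    have := hsub L' hpos hone x
    linarith
  have honeval : ∀ l, (lpinfOne Λ) l = 1 := fun l => rfl
  have hevalpos : ∀ Φ : lp (fun _ : Λ => ℝ) ∞, (∀ l, 0 ≤ Φ l) → 0 ≤ (lpEval l₀) Φ :=
    fun Φ h => h l₀
  have hevalone : (lpEval l₀) (lpinfOne Λ) = 1 := rfl
  by_cases hE : Nonempty E
  swap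
  · refine ⟨lpEval l₀, hevalpos, hevalone, ?_, hmin⟩
    have : IsEmpty E := not_nonempty_iff.mp hE
    simp only [fenchel]
    rw [iSup_of_empty, iSup_of_empty]
  by_cases htop : fenchel (fun x => ⨆ l, f l x) x₀ = ⊤
  · refine ⟨lpEval l₀, hevalpos, hevalone, ?_, hmin⟩
    have h := hmin (lpEval l₀) hevalpos hevalone
    rw [htop] at h ⊢
    exact (top_le_iff.mp h).symm
  -- Main case
  have hbot : fenchel (fun x => ⨆ l, f l x) x₀ ≠ ⊥ := by
    obtain ⟨xe⟩ := hE
    intro h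
    have h1 : ((x₀ xe - ⨆ l, f l xe : ℝ) : EReal) ≤ fenchel (fun x => ⨆ l, f l x) x₀ :=
      le_iSup (fun x => ((x₀ x - ⨆ l, f l x : ℝ) : EReal)) xe
    rw [h] at h1
    exact (EReal.coe_ne_bot _) (le_bot_iff.mp h1)
  set c := (fenchel (fun x => ⨆ l, f l x) x₀).toReal with hcdef
  have hvc : fenchel (fun x => ⨆ l, f l x) x₀ = (c : EReal) := (EReal.coe_toReal htop hbot).symm
  have ha : ∀ x : E, x₀ x - (⨆ l, f l x) ≤ c := by
    intro x
    refine EReal.coe_le_coe_iff.mp ?_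
    rw [← hvc]
    exact le_iSup (fun x => ((x₀ x - ⨆ l, f l x : ℝ) : EReal)) x
  -- the sublinear functional p
  set p : lp (fun _ : Λ => ℝ) ∞ → ℝ := fun Φ => ⨆ l, Φ l with hp
  have hple : ∀ (Φ : lp (fun _ : Λ => ℝ) ∞) l, Φ l ≤ p Φ := fun Φ l => le_ciSup (lp_bddAbove Φ) l
  have hpadd : ∀ Φ Ψ : lp (fun _ : Λ => ℝ) ∞, p (Φ + Ψ) ≤ p Φ + p Ψ := by
    intro Φ Ψ
    refine ciSup_le fun l => ?_
    rw [lp.coeFn_add, Pi.add_apply]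
    exact add_le_add (hple Φ l) (hple Ψ l)
  have hpsmul : ∀ (r : ℝ), 0 ≤ r → ∀ Φ : lp (fun _ : Λ => ℝ) ∞, p (r • Φ) = r * p Φ := by
    intro r hr Φ
    have h2 : ∀ l, (r • Φ) l = r * Φ l := fun l => by simp [lp.coeFn_smul]
    calc p (r • Φ) = ⨆ l, r * Φ l := iSup_congr h2
      _ = r * p Φ := (const_mul_ciSup (lp_bddAbove Φ) hr).symm
  have hp0 : p 0 = 0 := by
    simp only [hp, lp.coeFn_zero, Pi.zero_apply, ciSup_const]
  have hpone : p (lpinfOne Λ) = 1 := by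
    rw [hp]
    simp only [honeval, ciSup_const]
  have hpnegone : p (-lpinfOne Λ) = -1 := by
    rw [hp]
    have : ∀ l, (-lpinfOne Λ) l = -1 := by
      intro l
      rw [lp.coeFn_neg, Pi.neg_apply, honeval]
    simp only [this, ciSup_const]
  -- the maps S and B
  set S : (E →₀ ℝ) → lp (fun _ : Λ => ℝ) ∞ := fun σ => σ.sum fun x a => a • F x with hS
  set B : (E →₀ ℝ) → ℝ := fun σ => σ.sum fun x a => a * (x₀ x - c) with hB
  have hSeval : ∀ σ (l : Λ), (S σ) l = σ.sum fun x a => a * f l x := by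
    intro σ l
    have h1 : (S σ) l = lpEval l (S σ) := rfl
    rw [h1, hS]
    simp only []
    rw [map_finsuppSum]
    refine Finsupp.sum_congr fun x _ => ?_
    rw [map_smul, smul_eq_mul]
    have : lpEval l (F x) = f l x := hF x l
    rw [this]
  have hSadd : ∀ σ τ, S (σ + τ) = S σ + S τ := fun σ τ =>
    Finsupp.sum_add_index' (fun x => zero_smul ℝ (F x)) (fun x a b => add_smul a b (F x))
  have hBadd : ∀ σ τ, B (σ + τ) = B σ + B τ := fun σ τ =>
    Finsupp.sum_add_index' (fun x => zero_mul _) (fun x a b => add_mul a b _)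
  have hSsmul : ∀ (r : ℝ) σ, S (r • σ) = r • S σ := by
    intro r σ
    rw [hS]
    simp only []
    rw [Finsupp.sum_smul_index' (h := fun x a => a • F x) (fun x => zero_smul ℝ (F x)),
      Finsupp.smul_sum]
    exact Finsupp.sum_congr fun x _ => by rw [smul_eq_mul, mul_smul]
  have hBsmul : ∀ (r : ℝ) σ, B (r • σ) = r * B σ := by
    intro r σ
    rw [hB]
    simp only []
    rw [Finsupp.sum_smul_index' (h := fun x a => a * (x₀ x - c)) (fun x => zero_mul _),
      Finsupp.mul_sum]
    exact Finsupp.sum_congr fun x _ => by rw [smul_eq_mul, mul_assoc]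
  have hS0 : S 0 = 0 := Finsupp.sum_zero_index
  have hB0 : B 0 = 0 := Finsupp.sum_zero_index
  have hSsingle : ∀ x : E, S (Finsupp.single x 1) = F x := by
    intro x
    rw [hS]
    simp only []
    rw [Finsupp.sum_single_index (zero_smul ℝ (F x)), one_smul]
  have hBsingle : ∀ x : E, B (Finsupp.single x 1) = x₀ x - c := by
    intro x
    rw [hB]
    simp only []
    rw [Finsupp.sum_single_index (h := fun x a => a * (x₀ x - c)) (zero_mul _), one_mul]
  -- the key Mazur-Orlicz condition
  have hkey : ∀ σ : E →₀ ℝ, (∀ x, 0 ≤ σ x) → B σ ≤ p (S σ) := by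
    intro σ hσ
    set T := σ.sum fun _ a => a with hT
    have hT0 : 0 ≤ T := Finset.sum_nonneg fun x _ => hσ x
    rcases eq_or_lt_of_le hT0 with hTz | hTpos
    · -- T = 0 forces σ = 0
      have hz : σ = 0 := by
        ext x
        by_contra hx
        have hmem : x ∈ σ.support := Finsupp.mem_support_iff.mpr hx
        have : σ x = 0 := by
          have := (Finset.sum_eq_zero_iff_of_nonneg (fun y _ => hσ y)).mp hTz.symm x hmem
          exact this
        exact hx this
      rw [hz, hS0, hB0, hp0]
    · -- T > 0 : use infsup-convexity
      set m := σ.support.card with hm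
      have hmpos : 0 < m := by
        rw [hm, Finset.card_pos]
        by_contra hne
        rw [Finset.not_nonempty_iff_eq_empty] at hne
        have : T = 0 := by
          rw [hT, Finsupp.sum, hne, Finset.sum_empty]
        linarith
      set e := σ.support.equivFin.symm with he
      set t : Fin m → ℝ := fun j => σ (e j) / T with ht
      set xs : Fin m → E := fun j => (e j : E) with hxs
      have htpos : ∀ j, 0 ≤ t j := fun j => div_nonneg (hσ _) hT0
      have hsum1 : (∑ j, t j) = 1 := by
        rw [ht]
        simp only []
        rw [← Finset.sum_div]
        rw [show (∑ j, σ (e j)) = T from ?_]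
        · field_simp
        · rw [hT, Finsupp.sum, ← Finset.sum_coe_sort σ.support σ]
          exact Fintype.sum_equiv e _ _ fun j => rfl
      have hcv := hconv m hmpos t htpos hsum1 xs
      simp only [] at hcv
      -- lower bound for LHS of hcv
      have hlhs : ((-c : ℝ) : EReal) ≤ ⨅ x' : E, ⨆ l, ((f l x' - x₀ x' : ℝ) : EReal) := by
        refine le_iInf fun y => ?_
        have hb : BddAbove (Set.range fun l => f l y + -(x₀ y)) := bdd_shift (hbddf y) _
        have h1 : (⨆ l, ((f l y - x₀ y : ℝ) : EReal)) = ((⨆ l, (f l y - x₀ y) : ℝ) : EReal) := by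
          refine coe_ciSup ?_
          simpa [sub_eq_add_neg] using hb
        rw [h1]
        refine EReal.coe_le_coe_iff.mpr ?_
        have h2 : (⨆ l, (f l y - x₀ y)) = (⨆ l, f l y) - x₀ y := by
          simp only [sub_eq_add_neg]
          exact ciSup_add_const (hbddf y) _
        rw [h2]
        have := ha y
        linarith
      -- upper bound for RHS of hcv
      set A := ∑ j, t j * x₀ (xs j) with hA
      set r : Λ → ℝ := fun l => ∑ j, t j * f l (xs j) with hr
      have hinner : ∀ l, (∑ j, t j * (f l (xs j) - x₀ (xs j))) = r l - A := by
        intro l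
        rw [hr, hA]
        simp only []
        rw [← Finset.sum_sub_distrib]
        exact Finset.sum_congr rfl fun j _ => by ring
      have hrl : ∀ l, r l = (1 / T) * (S σ) l := by
        intro l
        rw [hr, hSeval]
        simp only []
        rw [Finsupp.sum, ← Finset.sum_coe_sort σ.support (fun x => σ x * f l x)]
        rw [← Fintype.sum_equiv e (fun j => σ (e j) * f l (e j)) (fun a => σ a * f l a)
          (fun j => rfl)]
        rw [Finset.mul_sum]
        exact Finset.sum_congr rfl fun j _ => by
          rw [ht, hxs]
          field_simp
      have hbr : BddAbove (Set.range r) := by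
        have := bdd_mul (lp_bddAbove (S σ)) (show (0:ℝ) ≤ 1 / T by positivity)
        simpa only [← hrl] using this
      have hrhs : (⨆ l, ((∑ j, t j * (f l (xs j) - x₀ (xs j)) : ℝ) : EReal))
          = (((1 / T) * p (S σ) - A : ℝ) : EReal) := by
        have h1 : (⨆ l, ((∑ j, t j * (f l (xs j) - x₀ (xs j)) : ℝ) : EReal))
            = ⨆ l, ((r l - A : ℝ) : EReal) := by
          congr 1
          funext l
          rw [hinner]
        rw [h1]
        have h2 : (⨆ l, ((r l - A : ℝ) : EReal)) = ((⨆ l, (r l - A) : ℝ) : EReal) := by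
          refine coe_ciSup ?_
          simpa [sub_eq_add_neg] using bdd_shift hbr (-A)
        rw [h2]
        congr 1
        have h3 : (⨆ l, (r l - A)) = (⨆ l, r l) - A := by
          simp only [sub_eq_add_neg]
          exact ciSup_add_const hbr _
        rw [h3]
        congr 1
        have h4 : (⨆ l, r l) = ⨆ l, (1 / T) * (S σ) l := by
          congr 1
          funext l
          exact hrl l
        rw [h4, ← const_mul_ciSup (lp_bddAbove (S σ)) (show (0:ℝ) ≤ 1 / T by positivity)]
      have hcv2 : ((-c : ℝ) : EReal) ≤ (((1 / T) * p (S σ) - A : ℝ) : EReal) :=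
        le_trans hlhs (le_trans hcv (le_of_eq hrhs))
      have hcv3 : -c ≤ (1 / T) * p (S σ) - A := EReal.coe_le_coe_iff.mp hcv2
      -- identify A * T and B σ
      have hAT : A * T = σ.sum fun x a => a * x₀ x := by
        rw [hA, Finsupp.sum, ← Finset.sum_coe_sort σ.support (fun x => σ x * x₀ x)]
        rw [← Fintype.sum_equiv e (fun j => σ (e j) * x₀ (e j)) (fun a => σ a * x₀ a)
          (fun j => rfl)]
        rw [Finset.sum_mul]
        exact Finset.sum_congr rfl fun j _ => by
          rw [ht, hxs]
          field_simp
      have hBσ : B σ = (σ.sum fun x a => a * x₀ x) - c * T := by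
        rw [hB]
        simp only []
        have h8 : (σ.sum fun x a => a * (x₀ x - c)) = σ.sum fun x a => (a * x₀ x - a * c) :=
          Finsupp.sum_congr fun x _ => by ring
        rw [h8, Finsupp.sum_sub]
        congr 1
        rw [hT, Finsupp.mul_sum]
        exact Finsupp.sum_congr fun x _ => mul_comm _ c
      have hAc : A - 1 / T * p (S σ) ≤ c := by linarith
      have h5 : T * (A - 1 / T * p (S σ)) ≤ T * c :=
        mul_le_mul_of_nonneg_left hAc hT0
      have h9 : T * (A - 1 / T * p (S σ)) = T * A - p (S σ) := by
        field_simp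
      rw [h9] at h5
      rw [hBσ, ← hAT, mul_comm A T, mul_comm c T]
      linarith
  -- the index type for the infimum defining q
  haveI hInst : Nonempty {σ : E →₀ ℝ // ∀ x, 0 ≤ σ x} := ⟨⟨0, fun x => le_refl 0⟩⟩
  set q : lp (fun _ : Λ => ℝ) ∞ → ℝ :=
    fun Φ => ⨅ σ : {σ : E →₀ ℝ // ∀ x, 0 ≤ σ x}, (p (Φ + S σ.1) - B σ.1) with hq
  have hqbdd : ∀ Φ : lp (fun _ : Λ => ℝ) ∞,
      BddBelow (Set.range fun σ : {σ : E →₀ ℝ // ∀ x, 0 ≤ σ x} => p (Φ + S σ.1) - B σ.1) := by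
    intro Φ
    refine ⟨-p (-Φ), ?_⟩
    rintro _ ⟨σ, rfl⟩
    have h1 : p (S σ.1) ≤ p (Φ + S σ.1) + p (-Φ) := by
      have := hpadd (Φ + S σ.1) (-Φ)
      rw [show Φ + S σ.1 + -Φ = S σ.1 by abel] at this
      exact this
    have h2 := hkey σ.1 σ.2
    simp only []
    linarith
  have hqle : ∀ (Φ : lp (fun _ : Λ => ℝ) ∞) (σ : {σ : E →₀ ℝ // ∀ x, 0 ≤ σ x}),
      q Φ ≤ p (Φ + S σ.1) - B σ.1 := fun Φ σ => ciInf_le (hqbdd Φ) σ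
  have hqp : ∀ Φ, q Φ ≤ p Φ := by
    intro Φ
    have := hqle Φ ⟨0, fun x => le_refl 0⟩
    rw [hS0, hB0, add_zero, sub_zero] at this
    exact this
  have hq0 : (0:ℝ) ≤ q 0 := by
    refine le_ciInf fun σ => ?_
    rw [zero_add]
    have := hkey σ.1 σ.2
    linarith
  have hqadd : ∀ Φ Ψ, q (Φ + Ψ) ≤ q Φ + q Ψ := by
    intro Φ Ψ
    have step : ∀ (σ τ : {σ : E →₀ ℝ // ∀ x, 0 ≤ σ x}),
        q (Φ + Ψ) ≤ (p (Φ + S σ.1) - B σ.1) + (p (Ψ + S τ.1) - B τ.1) := by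
      intro σ τ
      have h1 := hqle (Φ + Ψ) ⟨σ.1 + τ.1, fun x => by
        rw [Finsupp.add_apply]; exact add_nonneg (σ.2 x) (τ.2 x)⟩
      simp only [] at h1
      rw [hSadd, hBadd] at h1
      have h3 : Φ + Ψ + (S σ.1 + S τ.1) = (Φ + S σ.1) + (Ψ + S τ.1) := by abel
      rw [h3] at h1
      have h2 := hpadd (Φ + S σ.1) (Ψ + S τ.1)
      linarith
    have s1 : ∀ σ : {σ : E →₀ ℝ // ∀ x, 0 ≤ σ x}, q (Φ + Ψ) - (p (Φ + S σ.1) - B σ.1) ≤ q Ψ :=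
      fun σ => le_ciInf fun τ => by have := step σ τ; linarith
    have s2 : q (Φ + Ψ) - q Ψ ≤ q Φ := le_ciInf fun σ => by have := s1 σ; linarith
    linarith
  have hqsmul : ∀ (r : ℝ), 0 < r → ∀ Φ, q (r • Φ) = r * q Φ := by
    intro r hr Φ
    apply le_antisymm
    · have step : ∀ σ : {σ : E →₀ ℝ // ∀ x, 0 ≤ σ x},
          q (r • Φ) ≤ r * (p (Φ + S σ.1) - B σ.1) := by
        intro σ
        have h1 := hqle (r • Φ) ⟨r • σ.1, fun x => by
          rw [Finsupp.smul_apply, smul_eq_mul]; exact mul_nonneg hr.le (σ.2 x)⟩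
        simp only [] at h1
        rw [hSsmul, hBsmul, show r • Φ + r • S σ.1 = r • (Φ + S σ.1) by rw [smul_add],
          hpsmul r hr.le] at h1
        have := mul_sub r (p (Φ + S σ.1)) (B σ.1)
        linarith
      have h2 : q (r • Φ) / r ≤ q Φ := le_ciInf fun σ => by
        rw [div_le_iff₀ hr]
        have := step σ
        linarith [mul_comm (p (Φ + S σ.1) - B σ.1) r]
      calc q (r • Φ) = r * (q (r • Φ) / r) := by field_simp
        _ ≤ r * q Φ := mul_le_mul_of_nonneg_left h2 hr.le
    · refine le_ciInf fun σ => ?_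
      have h1 := hqle Φ ⟨r⁻¹ • σ.1, fun x => by
        rw [Finsupp.smul_apply, smul_eq_mul]
        exact mul_nonneg (inv_nonneg.mpr hr.le) (σ.2 x)⟩
      simp only [] at h1
      rw [hSsmul, hBsmul] at h1
      have h3 : Φ + r⁻¹ • S σ.1 = r⁻¹ • (r • Φ + S σ.1) := by
        rw [smul_add, smul_smul, inv_mul_cancel₀ (ne_of_gt hr), one_smul]
      rw [h3, hpsmul r⁻¹ (inv_nonneg.mpr hr.le)] at h1
      have h4 := mul_le_mul_of_nonneg_left h1 hr.le
      rw [mul_sub, ← mul_assoc, ← mul_assoc, mul_inv_cancel₀ (ne_of_gt hr), one_mul] at h4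
      linarith
  -- Hahn-Banach / Mazur-Orlicz
  obtain ⟨L, -, hL⟩ := exists_extension_of_le_sublinear
    (⟨⊥, 0⟩ : (lp (fun _ : Λ => ℝ) ∞) →ₗ.[ℝ] ℝ) q
    (fun r hr Φ => hqsmul r hr Φ) hqadd
    (fun x => by
      have hx : (x : lp (fun _ : Λ => ℝ) ∞) = 0 := (Submodule.mem_bot ℝ).mp x.2
      show (0 : ℝ) ≤ q (x : lp (fun _ : Λ => ℝ) ∞)
      rw [hx]
      exact hq0)
  have hLp : ∀ Φ, L Φ ≤ p Φ := fun Φ => (hL Φ).trans (hqp Φ)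
  have hLpos : ∀ Φ : lp (fun _ : Λ => ℝ) ∞, (∀ l, 0 ≤ Φ l) → 0 ≤ L Φ := by
    intro Φ h
    have h1 : L (-Φ) ≤ p (-Φ) := hLp _
    have h2 : p (-Φ) ≤ 0 := ciSup_le fun l => by
      rw [lp.coeFn_neg, Pi.neg_apply]
      linarith [h l]
    rw [map_neg] at h1
    linarith
  have hLone : L (lpinfOne Λ) = 1 := by
    have h1 := hLp (lpinfOne Λ)
    rw [hpone] at h1
    have h2 := hLp (-(lpinfOne Λ))
    rw [hpnegone, map_neg] at h2
    linarith
  have hLF : ∀ x : E, x₀ x - c ≤ L (F x) := by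
    intro x
    have h1 := (hL (-(F x))).trans (hqle (-(F x)) ⟨Finsupp.single x 1, fun y => by
      rw [Finsupp.single_apply]
      split <;> norm_num⟩)
    simp only [] at h1
    rw [hSsingle, hBsingle, neg_add_cancel, hp0, map_neg] at h1
    linarith
  refine ⟨L, hLpos, hLone, ?_, hmin⟩
  apply le_antisymm (hmin L hLpos hLone)
  rw [hvc]
  refine iSup_le fun x => EReal.coe_le_coe_iff.mpr ?_
  have := hLF x
  linarith
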